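/- Let n ≥ 2 be a natural number and R_b > 0 a real number. Then the set { min(1 + R_b·v, min(2 − 2/n, (n−1)/v)) : v ∈ ℝ, v > 0 } has greatest element min(2 − 2/n, (√(1 + 4R_b(n−1)) + 1)/2); that is, every element of the set is at most this value and the value is attained for some v > 0. (Unified system-DCT formula for comp-sys on the family M(v), covering both regimes of R_b in Theorem 12 of the appendix.) -/

import Mathlib

/-- Unified system-DCT formula for comp-sys on the family `M(v)`: the set of
values `min (1 + R_b·v) (min (2 - 2/n) ((n-1)/v))` over positive real `v` has
greatest element `min (2 - 2/n) ((√(1 + 4R_b(n-1)) + 1)/2)`. -/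
theorem comp_sys_system_dct_unified (n : ℕ) (hn : 2 ≤ n) (R : ℝ) (hR : 0 < R) :
    IsGreatest
      {x : ℝ | ∃ v : ℝ, 0 < v ∧
        x = min (1 + R * v) (min (2 - 2 / (n : ℝ)) (((n : ℝ) - 1) / v))}
      (min (2 - 2 / (n : ℝ)) ((Real.sqrt (1 + 4 * R * ((n : ℝ) - 1)) + 1) / 2)) := by
  have hn1 : (1 : ℝ) ≤ (n : ℝ) - 1 := by
    have : (2 : ℝ) ≤ (n : ℝ) := by exact_mod_cast hn
    linarith
  set s := Real.sqrt (1 + 4 * R * ((n : ℝ) - 1)) with hsdef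
  have harg : (0 : ℝ) ≤ 1 + 4 * R * ((n : ℝ) - 1) := by nlinarith
  have hs2 : s ^ 2 = 1 + 4 * R * ((n : ℝ) - 1) := Real.sq_sqrt harg
  have hsnn : 0 ≤ s := Real.sqrt_nonneg _
  have hs1 : 1 < s := by nlinarith
  have hvpos : 0 < (s - 1) / (2 * R) := div_pos (by linarith) (by linarith)
  set v := (s - 1) / (2 * R) with hvdef
  have hRv : R * v = (s - 1) / 2 := by
    rw [hvdef]; field_simp
  have h1 : 1 + R * v = (s + 1) / 2 := by rw [hRv]; ring
  have h2 : ((n : ℝ) - 1) / v = (s + 1) / 2 := by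
    rw [hvdef]
    rw [div_div_eq_mul_div, div_eq_div_iff (by linarith) (by norm_num)]
    nlinarith
  constructor
  · exact ⟨v, hvpos, by rw [h1, h2, min_left_comm, min_self]⟩
  · rintro x ⟨w, hw, rfl⟩
    apply le_min
    · exact le_trans (min_le_right _ _) (min_le_left _ _)
    · rcases le_total w v with hwv | hwv
      · apply le_trans (min_le_left _ _)
        rw [← h1]
        have := hR.le
        nlinarith
      · apply le_trans (min_le_right _ _)
        apply le_trans (min_le_right _ _)
        rw [← h2]
        apply div_le_div_of_nonneg_left (by linarith) hvpos hwv
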